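/- Let G be a finite group of conjugate type (p, 1), i.e., [G : C(x)] = p for all non-central x, with [G : Z(G)] = p^k. Then the number of distinct element centralizers of G equals (p^k − 1)/(p − 1) + 1, and this also equals the number of z-classes of G. -/

import Mathlib

/-- The set of element centralizers of `G`. -/
def cent (G : Type*) [Group G] : Set (Subgroup G) :=
  Set.range fun x : G => Subgroup.centralizer {x}

/-- The number of distinct element centralizers of `G`. -/
noncomputable def numCent (G : Type*) [Group G] : ℕ := (cent G).ncard

/-- The center of the centralizer `C(x)`, viewed as a subgroup of `G`. -/
def centerCentralizer {G : Type*} [Group G] (x : G) : Subgroup G :=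
  Subgroup.centralizer {x} ⊓
    Subgroup.centralizer ((Subgroup.centralizer {x} : Subgroup G) : Set G)

/-- `G` is an F-group: for non-central `x, y`, `C(x) ≤ C(y)` implies `C(x) = C(y)`. -/
def IsFGroup (G : Type*) [Group G] : Prop :=
  ∀ x y : G, x ∉ Subgroup.center G → y ∉ Subgroup.center G →
    Subgroup.centralizer {x} ≤ Subgroup.centralizer {y} →
    Subgroup.centralizer ({x} : Set G) = Subgroup.centralizer {y}

/-- The set of conjugates of a subgroup `H` of `G`. -/
def conjugates {G : Type*} [Group G] (H : Subgroup G) : Set (Subgroup G) :=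
  {K | ∃ g : G, K = Subgroup.map (MulAut.conj g).toMonoidHom H}

/-- The number of `z`-classes of `G`: elements are `z`-equivalent when their
centralizers are conjugate in `G`, so the number of `z`-classes is the number of
distinct conjugacy classes of element centralizers. -/
noncomputable def numZClasses (G : Type*) [Group G] : ℕ :=
  (Set.range fun x : G => conjugates (Subgroup.centralizer {x})).ncard

section Aux

variable {G : Type*} [Group G] [Finite G]

lemma centralizer_singleton_eq_top_iff {x : G} :
    Subgroup.centralizer {x} = ⊤ ↔ x ∈ Subgroup.center G := by
  rw [Subgroup.centralizer_eq_top_iff_subset, Set.singleton_subset_iff, SetLike.mem_coe]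

lemma exists_not_mem_centralizer {p : ℕ} (hp : p.Prime)
    {x : G} (hx : (Subgroup.centralizer {x} : Subgroup G).index = p) :
    ∃ g : G, g ∉ Subgroup.centralizer {x} := by
  by_contra hc
  push_neg at hc
  have htop : Subgroup.centralizer ({x} : Set G) = ⊤ :=
    (Subgroup.eq_top_iff' _).mpr hc
  rw [htop, Subgroup.index_top] at hx
  exact hp.ne_one hx.symm

lemma centralizer_maximal {p : ℕ} (hp : p.Prime) {x : G}
    (hx : (Subgroup.centralizer {x} : Subgroup G).index = p)
    {H : Subgroup G} (hle : Subgroup.centralizer {x} ≤ H) (hH : H ≠ ⊤) :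
    H = Subgroup.centralizer {x} := by
  have hd : H.index ∣ p := hx ▸ Subgroup.index_dvd_of_le hle
  rcases hp.eq_one_or_self_of_dvd _ hd with h1 | h2
  · exact absurd (Subgroup.index_eq_one.mp h1) hH
  · have hrel := Subgroup.relIndex_mul_index hle
    rw [hx, h2] at hrel
    have h1 : (Subgroup.centralizer {x}).relIndex H = 1 :=
      Nat.eq_of_mul_eq_mul_right hp.pos (by rw [hrel, one_mul])
    exact le_antisymm (Subgroup.relIndex_eq_one.mp h1) hle

lemma center_le_centerCentralizer (x : G) :
    Subgroup.center G ≤ centerCentralizer x :=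
  le_inf (Subgroup.center_le_centralizer _) (Subgroup.center_le_centralizer _)

lemma mem_centerCentralizer_self (x : G) : x ∈ centerCentralizer x := by
  rw [centerCentralizer, Subgroup.mem_inf]
  refine ⟨Subgroup.mem_centralizer_singleton_iff.mpr rfl, ?_⟩
  rw [Subgroup.mem_centralizer_iff]
  intro c hc
  exact Subgroup.mem_centralizer_singleton_iff.mp (SetLike.mem_coe.mp hc)

lemma centralizer_eq_of_mem_centerCentralizer {p : ℕ} (hp : p.Prime)
    {x y : G} (hx : (Subgroup.centralizer {x} : Subgroup G).index = p)
    (hy : y ∈ centerCentralizer x) (hyZ : y ∉ Subgroup.center G) :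
    Subgroup.centralizer ({y} : Set G) = Subgroup.centralizer {x} := by
  rw [centerCentralizer, Subgroup.mem_inf] at hy
  have hle : Subgroup.centralizer ({x} : Set G) ≤ Subgroup.centralizer {y} := by
    intro c hc
    rw [Subgroup.mem_centralizer_singleton_iff]
    exact (Subgroup.mem_centralizer_iff.mp hy.2) c (SetLike.mem_coe.mpr hc)
  exact centralizer_maximal hp hx hle
    (fun ht => hyZ (centralizer_singleton_eq_top_iff.mp ht))

/-- Mann's lemma: `[Z(C(x)) : Z(G)] = p`. -/
lemma relIndex_center_centerCentralizer {p k : ℕ} (hp : p.Prime)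
    (h : ∀ x : G, x ∉ Subgroup.center G → (Subgroup.centralizer {x}).index = p)
    (hk : (Subgroup.center G).index = p ^ k)
    {x : G} (hx : x ∉ Subgroup.center G) :
    (Subgroup.center G).relIndex (centerCentralizer x) = p := by
  have hxC := h x hx
  obtain ⟨g, hg⟩ := exists_not_mem_centralizer hp hxC
  have hgZ : g ∉ Subgroup.center G := fun hgZ => hg (Subgroup.center_le_centralizer _ hgZ)
  have hZK : Subgroup.center G ≤ centerCentralizer x := center_le_centerCentralizer x
  have hinf : Subgroup.centralizer {g} ⊓ centerCentralizer x = Subgroup.center G := by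
    apply le_antisymm
    · intro y hy
      rw [Subgroup.mem_inf] at hy
      by_contra hyZ
      have heq := centralizer_eq_of_mem_centerCentralizer hp hxC hy.2 hyZ
      have hgy : g ∈ Subgroup.centralizer ({y} : Set G) :=
        Subgroup.mem_centralizer_singleton_iff.mpr
          (Subgroup.mem_centralizer_singleton_iff.mp hy.1).symm
      rw [heq] at hgy
      exact hg hgy
    · exact le_inf (Subgroup.center_le_centralizer _) hZK
  have hle : (Subgroup.center G).relIndex (centerCentralizer x) ≤ p := by
    have h1 : (Subgroup.centralizer {g} ⊓ centerCentralizer x).relIndex (centerCentralizer x)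
        = (Subgroup.centralizer {g}).relIndex (centerCentralizer x) :=
      Subgroup.inf_relIndex_right _ _
    have h2 : (Subgroup.centralizer {g}).relIndex (centerCentralizer x)
        ≤ (Subgroup.centralizer {g}).relIndex ⊤ :=
      Subgroup.relIndex_le_of_le_right le_top
        (by rw [Subgroup.relIndex_top_right]; exact Subgroup.index_ne_zero_of_finite)
    rw [← hinf, h1]
    calc (Subgroup.centralizer {g}).relIndex (centerCentralizer x)
        ≤ (Subgroup.centralizer {g}).relIndex ⊤ := h2
      _ = p := by rw [Subgroup.relIndex_top_right]; exact h g hgZ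
  have hdvd : (Subgroup.center G).relIndex (centerCentralizer x) ∣ p ^ k := by
    have h1 := Subgroup.relIndex_mul_relIndex (Subgroup.center G) (centerCentralizer x) ⊤
      hZK le_top
    rw [Subgroup.relIndex_top_right, Subgroup.relIndex_top_right, hk] at h1
    exact Dvd.intro _ h1
  have hne1 : (Subgroup.center G).relIndex (centerCentralizer x) ≠ 1 := fun h1 =>
    hx (Subgroup.relIndex_eq_one.mp h1 (mem_centerCentralizer_self x))
  obtain ⟨j, _, hj⟩ := (Nat.dvd_prime_pow hp).mp hdvd
  rw [hj] at hle hne1 ⊢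
  rcases Nat.eq_zero_or_pos j with h0 | h1
  · rw [h0, pow_zero] at hne1; exact absurd rfl hne1
  · refine le_antisymm hle ?_
    calc p = p ^ 1 := (pow_one p).symm
      _ ≤ p ^ j := Nat.pow_le_pow_right hp.pos h1

lemma fiber_eq {p : ℕ} (hp : p.Prime)
    (h : ∀ x : G, x ∉ Subgroup.center G → (Subgroup.centralizer {x}).index = p)
    {x y : G} (hx : x ∉ Subgroup.center G) :
    (y ∉ Subgroup.center G ∧ Subgroup.centralizer {y} = Subgroup.centralizer {x}) ↔
      (y ∈ centerCentralizer x ∧ y ∉ Subgroup.center G) := by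
  constructor
  · rintro ⟨hyZ, hyx⟩
    refine ⟨?_, hyZ⟩
    rw [centerCentralizer, Subgroup.mem_inf]
    constructor
    · rw [← hyx]; exact Subgroup.mem_centralizer_singleton_iff.mpr rfl
    · rw [Subgroup.mem_centralizer_iff]
      intro c hc
      have hc' : c ∈ Subgroup.centralizer ({y} : Set G) := by
        rw [hyx]; exact SetLike.mem_coe.mp hc
      exact Subgroup.mem_centralizer_singleton_iff.mp hc'
  · rintro ⟨hyK, hyZ⟩
    exact ⟨hyZ, centralizer_eq_of_mem_centerCentralizer hp (h x hx) hyK hyZ⟩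

/-- Centralizers are normal: `C(gxg⁻¹) = C(x)`. -/
lemma centralizer_conj_eq {p k : ℕ} (hp : p.Prime)
    (h : ∀ x : G, x ∉ Subgroup.center G → (Subgroup.centralizer {x}).index = p)
    (hk : (Subgroup.center G).index = p ^ k) (x g : G) :
    Subgroup.centralizer {g * x * g⁻¹} = Subgroup.centralizer {x} := by
  by_cases hx : x ∈ Subgroup.center G
  · have hc : g * x = x * g := Subgroup.mem_center_iff.mp hx g
    rw [hc, mul_inv_cancel_right]
  · by_contra hne
    set y := g * x * g⁻¹ with hy_def
    have hyZ : y ∉ Subgroup.center G := by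
      intro hyZ
      apply hx
      have h1 : g⁻¹ * y = y * g⁻¹ := Subgroup.mem_center_iff.mp hyZ g⁻¹
      have h2 : x = y := by
        calc x = g⁻¹ * (g * x * g⁻¹) * g := by group
          _ = g⁻¹ * y * g := by rw [← hy_def]
          _ = y * g⁻¹ * g := by rw [h1]
          _ = y := by group
      rw [h2]; exact hyZ
    have hg : g ∉ Subgroup.centralizer ({x} : Set G) := by
      intro hgC
      have hgx : g * x = x * g := Subgroup.mem_centralizer_singleton_iff.mp hgC
      apply hne
      rw [hy_def, hgx, mul_inv_cancel_right]
    -- relIndex of C y in C x is p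
    have relp : (Subgroup.centralizer {y}).relIndex (Subgroup.centralizer {x}) = p := by
      have hle : (Subgroup.centralizer {y}).relIndex (Subgroup.centralizer {x}) ≤ p := by
        calc (Subgroup.centralizer {y}).relIndex (Subgroup.centralizer {x})
            ≤ (Subgroup.centralizer {y}).relIndex ⊤ :=
              Subgroup.relIndex_le_of_le_right le_top
                (by rw [Subgroup.relIndex_top_right]; exact Subgroup.index_ne_zero_of_finite)
          _ = p := by rw [Subgroup.relIndex_top_right]; exact h y hyZ
      have hdvd : (Subgroup.centralizer {y}).relIndex (Subgroup.centralizer {x}) ∣ p ^ k := by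
        have hZ_inf : Subgroup.center G ≤ Subgroup.centralizer {y} ⊓ Subgroup.centralizer {x} :=
          le_inf (Subgroup.center_le_centralizer _) (Subgroup.center_le_centralizer _)
        have h1 := Subgroup.relIndex_mul_relIndex (Subgroup.center G)
          (Subgroup.centralizer {y} ⊓ Subgroup.centralizer {x}) (Subgroup.centralizer {x})
          hZ_inf inf_le_right
        have h2 := Subgroup.relIndex_mul_index
          (Subgroup.center_le_centralizer ({x} : Set G))
        rw [hk] at h2
        have h3 : (Subgroup.centralizer {y} ⊓ Subgroup.centralizer {x}).relIndex
            (Subgroup.centralizer {x}) ∣ (Subgroup.center G).relIndex (Subgroup.centralizer {x}) :=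
          Dvd.intro_left _ h1
        have h4 : (Subgroup.center G).relIndex (Subgroup.centralizer {x}) ∣ p ^ k :=
          Dvd.intro _ h2
        have h5 := dvd_trans h3 h4
        rwa [Subgroup.inf_relIndex_right] at h5
      have hne1 : (Subgroup.centralizer {y}).relIndex (Subgroup.centralizer {x}) ≠ 1 := by
        intro h1
        have hle2 : Subgroup.centralizer ({x} : Set G) ≤ Subgroup.centralizer {y} :=
          Subgroup.relIndex_eq_one.mp h1
        have : Subgroup.centralizer ({y} : Set G) = Subgroup.centralizer {x} :=
          centralizer_maximal hp (h x hx) hle2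
            (fun ht => hyZ (centralizer_singleton_eq_top_iff.mp ht))
        exact hne this
      obtain ⟨j, _, hj⟩ := (Nat.dvd_prime_pow hp).mp hdvd
      rw [hj] at hle hne1 ⊢
      rcases Nat.eq_zero_or_pos j with h0 | h1
      · rw [h0, pow_zero] at hne1; exact absurd rfl hne1
      · refine le_antisymm hle ?_
        calc p = p ^ 1 := (pow_one p).symm
          _ ≤ p ^ j := Nat.pow_le_pow_right hp.pos h1
    -- the conjugacy class of x
    set S : Set G := {a | ∃ t : G, t * x * t⁻¹ = a} with hS_def
    have hxS : x ∈ S := ⟨1, by group⟩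
    -- |S| ≤ p via surjection from G ⧸ C(x)
    have hS_le : Nat.card S ≤ p := by
      have hresp : ∀ (a b : G),
          @Setoid.r _ (QuotientGroup.leftRel (Subgroup.centralizer {x})) a b →
          ((⟨a * x * a⁻¹, a, rfl⟩ : S) = ⟨b * x * b⁻¹, b, rfl⟩) := by
        intro a b hab
        rw [QuotientGroup.leftRel_apply] at hab
        have hc : (a⁻¹ * b) * x = x * (a⁻¹ * b) :=
          Subgroup.mem_centralizer_singleton_iff.mp hab
        have hcc : (a⁻¹ * b) * x * (a⁻¹ * b)⁻¹ = x := by rw [hc, mul_inv_cancel_right]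
        apply Subtype.ext
        show a * x * a⁻¹ = b * x * b⁻¹
        calc a * x * a⁻¹ = a * ((a⁻¹ * b) * x * (a⁻¹ * b)⁻¹) * a⁻¹ := by rw [hcc]
          _ = b * x * b⁻¹ := by group
      have hsurj : Function.Surjective
          (fun q : G ⧸ Subgroup.centralizer {x} =>
            Quotient.liftOn' q (fun t => (⟨t * x * t⁻¹, t, rfl⟩ : S)) hresp) := by
        rintro ⟨a, t, ht⟩
        exact ⟨QuotientGroup.mk t, Subtype.ext ht⟩
      calc Nat.card S ≤ Nat.card (G ⧸ Subgroup.centralizer {x}) :=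
            Nat.card_le_card_of_surjective _ hsurj
        _ = p := by rw [← Subgroup.index_eq_card]; exact h x hx
    -- injection from C(x) ⧸ D into S \ {x}
    have hinj : p ≤ Nat.card ((S \ {x} : Set G)) := by
      set D : Subgroup (Subgroup.centralizer ({x} : Set G)) :=
        (Subgroup.centralizer {y}).subgroupOf (Subgroup.centralizer {x}) with hD_def
      have hmem : ∀ c : Subgroup.centralizer ({x} : Set G),
          (c : G) * y * (c : G)⁻¹ ∈ S \ {x} := by
        intro c
        have hcx : (c : G) * x = x * (c : G) :=
          Subgroup.mem_centralizer_singleton_iff.mp c.2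
        constructor
        · refine ⟨(c : G) * g, ?_⟩
          rw [hy_def]; group
        · intro hmem
          have hcy : (c : G) * y * (c : G)⁻¹ = x := hmem
          apply hne
          have hyx : y = x := by
            calc y = (c : G)⁻¹ * ((c : G) * y * (c : G)⁻¹) * (c : G) := by group
              _ = (c : G)⁻¹ * x * (c : G) := by rw [hcy]
              _ = (c : G)⁻¹ * (x * (c : G)) := by group
              _ = (c : G)⁻¹ * ((c : G) * x) := by rw [hcx]
              _ = x := by group
          rw [hyx]
      have hresp2 : ∀ (a b : Subgroup.centralizer ({x} : Set G)),
          @Setoid.r _ (QuotientGroup.leftRel D) a b →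
          ((⟨(a : G) * y * (a : G)⁻¹, hmem a⟩ : (S \ {x} : Set G)) =
            ⟨(b : G) * y * (b : G)⁻¹, hmem b⟩) := by
        intro a b hab
        rw [QuotientGroup.leftRel_apply] at hab
        have hab' : ((a⁻¹ * b : Subgroup.centralizer ({x} : Set G)) : G)
            ∈ Subgroup.centralizer ({y} : Set G) := hab
        have hc : ((a : G)⁻¹ * (b : G)) * y = y * ((a : G)⁻¹ * (b : G)) := by
          have := Subgroup.mem_centralizer_singleton_iff.mp hab'
          simpa using this
        have hcc : ((a : G)⁻¹ * (b : G)) * y * ((a : G)⁻¹ * (b : G))⁻¹ = y := by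
          rw [hc, mul_inv_cancel_right]
        apply Subtype.ext
        show (a : G) * y * (a : G)⁻¹ = (b : G) * y * (b : G)⁻¹
        calc (a : G) * y * (a : G)⁻¹
            = (a : G) * (((a : G)⁻¹ * (b : G)) * y * ((a : G)⁻¹ * (b : G))⁻¹) * (a : G)⁻¹ := by
              rw [hcc]
          _ = (b : G) * y * (b : G)⁻¹ := by group
      have hinj2 : Function.Injective
          (fun q : Subgroup.centralizer ({x} : Set G) ⧸ D =>
            Quotient.liftOn' q
              (fun c => (⟨(c : G) * y * (c : G)⁻¹, hmem c⟩ : (S \ {x} : Set G))) hresp2) := by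
        intro q1 q2
        induction q1 using Quotient.inductionOn'
        induction q2 using Quotient.inductionOn'
        rename_i a b
        intro hab
        have hval : (a : G) * y * (a : G)⁻¹ = (b : G) * y * (b : G)⁻¹ :=
          congrArg Subtype.val hab
        apply Quotient.sound'
        rw [QuotientGroup.leftRel_apply]
        show ((a⁻¹ * b : Subgroup.centralizer ({x} : Set G)) : G)
          ∈ Subgroup.centralizer ({y} : Set G)
        rw [Subgroup.mem_centralizer_singleton_iff]
        push_cast
        have : y * ((a : G)⁻¹ * (b : G)) = ((a : G)⁻¹ * (b : G)) * y := by
          have h1 : y = (a : G)⁻¹ * ((b : G) * y * (b : G)⁻¹) * (a : G) := by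
            rw [← hval]; group
          calc y * ((a : G)⁻¹ * (b : G))
              = ((a : G)⁻¹ * ((b : G) * y * (b : G)⁻¹) * (a : G)) * ((a : G)⁻¹ * (b : G)) := by
                rw [← h1]
            _ = (a : G)⁻¹ * (b : G) * y := by group
            _ = ((a : G)⁻¹ * (b : G)) * y := by group
        exact this.symm
      have hcard1 : Nat.card (Subgroup.centralizer ({x} : Set G) ⧸ D) = p := by
        rw [← Subgroup.index_eq_card]
        exact relp
      calc p = Nat.card (Subgroup.centralizer ({x} : Set G) ⧸ D) := hcard1.symm
        _ ≤ Nat.card ((S \ {x} : Set G)) := Nat.card_le_card_of_injective _ hinj2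
    -- contradiction
    have hcard2 : Nat.card ((S \ {x} : Set G)) = Nat.card S - 1 := by
      rw [Nat.card_coe_set_eq, Nat.card_coe_set_eq, Set.ncard_diff_singleton_of_mem hxS]
    rw [hcard2] at hinj
    have := hp.two_le
    omega

lemma map_conj_centralizer (g x : G) :
    Subgroup.map (MulAut.conj g).toMonoidHom (Subgroup.centralizer {x})
      = Subgroup.centralizer {g * x * g⁻¹} := by
  ext z
  simp only [Subgroup.mem_map, Subgroup.mem_centralizer_singleton_iff,
    MulEquiv.coe_toMonoidHom, MulAut.conj_apply]
  constructor
  · rintro ⟨w, hw, rfl⟩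
    calc g * w * g⁻¹ * (g * x * g⁻¹) = g * (w * x) * g⁻¹ := by group
      _ = g * (x * w) * g⁻¹ := by rw [hw]
      _ = g * x * g⁻¹ * (g * w * g⁻¹) := by group
  · intro hz
    refine ⟨g⁻¹ * z * g, ?_, by group⟩
    calc g⁻¹ * z * g * x = g⁻¹ * (z * (g * x * g⁻¹)) * g := by group
      _ = g⁻¹ * ((g * x * g⁻¹) * z) * g := by rw [hz]
      _ = x * (g⁻¹ * z * g) := by group

lemma conjugates_centralizer_eq {p k : ℕ} (hp : p.Prime)
    (h : ∀ x : G, x ∉ Subgroup.center G → (Subgroup.centralizer {x}).index = p)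
    (hk : (Subgroup.center G).index = p ^ k) (x : G) :
    conjugates (Subgroup.centralizer ({x} : Set G)) = {Subgroup.centralizer {x}} := by
  ext K
  simp only [conjugates, Set.mem_setOf_eq, Set.mem_singleton_iff]
  constructor
  · rintro ⟨g, rfl⟩
    rw [map_conj_centralizer, centralizer_conj_eq hp h hk x g]
  · rintro rfl
    refine ⟨1, ?_⟩
    rw [map_conj_centralizer]
    norm_num

end Aux

theorem stmt9 (G : Type*) [Group G] [Finite G] (p k : ℕ) (hp : p.Prime)
    (h : ∀ x : G, x ∉ Subgroup.center G → (Subgroup.centralizer {x}).index = p)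
    (hk : (Subgroup.center G).index = p ^ k) :
    numCent G = (p ^ k - 1) / (p - 1) + 1 ∧
      numZClasses G = (p ^ k - 1) / (p - 1) + 1 := by
  classical
  have : Fintype G := Fintype.ofFinite G
  have h2p : 2 ≤ p := hp.two_le
  set Z := Subgroup.center G with hZ
  set sx : Finset G := Finset.univ.filter (fun x => x ∉ Z) with hsx
  set tf : Finset (Subgroup G) :=
    sx.image (fun x => Subgroup.centralizer {x}) with htf
  have cZpos : 0 < Nat.card Z := Nat.card_pos
  have hG : Nat.card G = p ^ k * Nat.card Z := by
    rw [← hk, Subgroup.index_mul_card]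
  have hZcard : (Finset.univ.filter (fun x : G => x ∈ Z)).card = Nat.card Z := by
    rw [Nat.card_eq_fintype_card]
    exact (Fintype.card_subtype _).symm
  have hsx_card : sx.card + Nat.card Z = Nat.card G := by
    have h1 := Finset.card_filter_add_card_filter_not
      (s := (Finset.univ : Finset G)) (p := fun x : G => x ∈ Z)
    have h2 : (Finset.univ : Finset G).card = Nat.card G := by
      rw [Finset.card_univ, Nat.card_eq_fintype_card]
    rw [hsx]
    omega
  -- each fiber has (p-1) * |Z| elements
  have hfiber : ∀ C ∈ tf,
      (sx.filter (fun x => Subgroup.centralizer {x} = C)).card = (p - 1) * Nat.card Z := by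
    intro C hC
    obtain ⟨x₀, hx₀s, hx₀⟩ := Finset.mem_image.mp hC
    have hx₀Z : x₀ ∉ Z := (Finset.mem_filter.mp hx₀s).2
    have hKcard : Nat.card (centerCentralizer x₀) = p * Nat.card Z := by
      have h1 := Subgroup.index_mul_card (Z.subgroupOf (centerCentralizer x₀))
      have h2 : (Z.subgroupOf (centerCentralizer x₀)).index = p :=
        relIndex_center_centerCentralizer hp h hk hx₀Z
      have h3 : Nat.card (Z.subgroupOf (centerCentralizer x₀)) = Nat.card Z :=
        Nat.card_congr (Subgroup.subgroupOfEquivOfLe (center_le_centerCentralizer x₀)).toEquiv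
      rw [h2, h3] at h1
      exact h1.symm
    have hset : sx.filter (fun x => Subgroup.centralizer {x} = C) =
        Finset.univ.filter (fun y : G => y ∈ centerCentralizer x₀ ∧ y ∉ Z) := by
      ext y
      simp only [hsx, Finset.mem_filter, Finset.mem_univ, true_and, and_assoc]
      rw [← hx₀]
      constructor
      · rintro ⟨hyZ, hyx⟩
        exact (fiber_eq hp h hx₀Z).mp ⟨hyZ, hyx⟩
      · rintro ⟨hyK, hyZ⟩
        exact ((fiber_eq hp h hx₀Z).mpr ⟨hyK, hyZ⟩)
    rw [hset]
    have hKfcard : (Finset.univ.filter (fun y : G => y ∈ centerCentralizer x₀)).card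
        = Nat.card (centerCentralizer x₀) := by
      rw [Nat.card_eq_fintype_card]
      exact (Fintype.card_subtype _).symm
    have hsplit := Finset.card_filter_add_card_filter_not
      (s := Finset.univ.filter (fun y : G => y ∈ centerCentralizer x₀)) (p := fun y : G => y ∈ Z)
    rw [Finset.filter_filter, Finset.filter_filter] at hsplit
    have hZfilter : (Finset.univ.filter (fun y : G => y ∈ centerCentralizer x₀ ∧ y ∈ Z))
        = Finset.univ.filter (fun y : G => y ∈ Z) := by
      ext y
      simp only [Finset.mem_filter, Finset.mem_univ, true_and]
      exact ⟨fun hy => hy.2, fun hy => ⟨center_le_centerCentralizer x₀ hy, hy⟩⟩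
    rw [hZfilter, hZcard, hKfcard, hKcard] at hsplit
    have harith : (p - 1) * Nat.card Z = p * Nat.card Z - Nat.card Z := by
      rw [Nat.sub_mul, one_mul]
    omega
  have htotal : sx.card = tf.card * ((p - 1) * Nat.card Z) := by
    rw [Finset.card_eq_sum_card_image (fun x => Subgroup.centralizer {x}) sx]
    rw [Finset.sum_congr rfl hfiber, Finset.sum_const, smul_eq_mul]
  have hcancel : tf.card * (p - 1) = p ^ k - 1 := by
    apply Nat.eq_of_mul_eq_mul_right cZpos
    have h1 : (p ^ k - 1) * Nat.card Z = p ^ k * Nat.card Z - Nat.card Z := by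
      rw [Nat.sub_mul, one_mul]
    rw [mul_assoc, ← htotal, h1, ← hG]
    omega
  have htfcard : tf.card = (p ^ k - 1) / (p - 1) :=
    (Nat.div_eq_of_eq_mul_left (by omega) hcancel.symm).symm
  -- cent G = insert ⊤ tf
  have hcent : cent G = insert ⊤ (↑tf : Set (Subgroup G)) := by
    ext H
    simp only [cent, Set.mem_range, Set.mem_insert_iff, Finset.mem_coe]
    constructor
    · rintro ⟨x, rfl⟩
      by_cases hx : x ∈ Z
      · left; exact centralizer_singleton_eq_top_iff.mpr hx
      · right
        exact Finset.mem_image.mpr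
          ⟨x, Finset.mem_filter.mpr ⟨Finset.mem_univ x, hx⟩, rfl⟩
    · rintro (rfl | hH)
      · exact ⟨1, centralizer_singleton_eq_top_iff.mpr (one_mem Z)⟩
      · obtain ⟨x, _, hfx⟩ := Finset.mem_image.mp hH
        exact ⟨x, hfx⟩
  have htop : (⊤ : Subgroup G) ∉ (↑tf : Set (Subgroup G)) := by
    intro hmem
    obtain ⟨x, hxs, hfx⟩ := Finset.mem_image.mp (Finset.mem_coe.mp hmem)
    have hxZ : x ∉ Z := (Finset.mem_filter.mp hxs).2
    have := h x hxZ
    rw [hfx, Subgroup.index_top] at this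
    exact hp.ne_one this.symm
  have hnumCent : numCent G = tf.card + 1 := by
    rw [numCent, hcent, Set.ncard_insert_of_notMem htop, Set.ncard_coe_finset]
  have hzc : numZClasses G = numCent G := by
    rw [numZClasses, numCent, cent]
    have hcomp : (fun x : G => conjugates (Subgroup.centralizer {x})) =
        (fun H : Subgroup G => ({H} : Set (Subgroup G))) ∘
          (fun x : G => Subgroup.centralizer {x}) :=
      funext fun x => conjugates_centralizer_eq hp h hk x
    rw [hcomp, Set.range_comp]
    exact Set.ncard_image_of_injective _ Set.singleton_injective
  refine ⟨?_, ?_⟩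
  · rw [hnumCent, htfcard]
  · rw [hzc, hnumCent, htfcard]
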